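/- Let n ≥ 1 be an integer, ω ∈ ℝⁿ, λ ∈ ℝ, γ > 0, Δ : [0,∞) → [1,∞), K > 0, and 0 < σ < r. Suppose |k·ω + λ| ≥ γ/Δ(|k|₁) for every k ∈ ℤⁿ with |k|₁ ≤ K. Let (R_k)_{k∈ℤⁿ, |k|₁≤K} be complex numbers and define the trigonometric polynomials R(θ) = ∑_{|k|₁≤K} R_k e^{i k·θ} and F(θ) = ∑_{|k|₁≤K} (R_k / (i(k·ω + λ))) e^{i k·θ} on ℝⁿ. Then: (1) ∑_{b=1}^n ω_b (∂F/∂θ_b)(θ) + i λ F(θ) = R(θ) for every θ ∈ ℝⁿ; and (2) ∑_{|k|₁≤K} (|R_k|/|k·ω + λ|) e^{|k|₁(r−σ)} ≤ γ^{−1} (sup_{t≥0} Δ(t) e^{−tσ}) ∑_{|k|₁≤K} |R_k| e^{|k|₁ r}, provided the supremum is finite. -/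

import Mathlib

open Real Complex

/-- The scalar homological equation `ω·∇F + iλF = R` for trigonometric polynomials
`R(θ) = ∑_{|k|₁ ≤ K} R_k e^{i k·θ}` under the Brjuno–Rüssmann small-divisor bound
`|k·ω + λ| ≥ γ/Δ(|k|₁)`: the function
`F(θ) = ∑_{|k|₁ ≤ K} (R_k / (i(k·ω + λ))) e^{i k·θ}` solves the equation, and its
weighted Fourier norm on a strip of width `r - σ` is controlled by
`γ⁻¹ (sup_{t ≥ 0} Δ(t) e^{-tσ})` times the weighted norm of `R` on a strip of width `r`. -/
theorem homological_equation_solution (n : ℕ) (hn : 1 ≤ n)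
    (ω : Fin n → ℝ) (lam γ K σ r : ℝ) (hγ : 0 < γ) (hK : 0 < K)
    (hσ : 0 < σ) (hσr : σ < r)
    (Δ : ℝ → ℝ) (hΔ1 : ∀ t, 0 ≤ t → 1 ≤ Δ t)
    (hsd : ∀ k : Fin n → ℤ, (∑ i, |(k i : ℝ)|) ≤ K →
      γ / Δ (∑ i, |(k i : ℝ)|) ≤ |(∑ i, (k i : ℝ) * ω i) + lam|)
    (R : (Fin n → ℤ) → ℂ)
    (hRsupp : ∀ k : Fin n → ℤ, K < (∑ i, |(k i : ℝ)|) → R k = 0)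
    (Rfun Ffun : (Fin n → ℝ) → ℂ)
    (hRfun : ∀ θ : Fin n → ℝ, Rfun θ =
      ∑' k : Fin n → ℤ, R k * Complex.exp (Complex.I * ((∑ i, (k i : ℝ) * θ i : ℝ) : ℂ)))
    (hFfun : ∀ θ : Fin n → ℝ, Ffun θ =
      ∑' k : Fin n → ℤ,
        R k / (Complex.I * (((∑ i, (k i : ℝ) * ω i) + lam : ℝ) : ℂ)) *
          Complex.exp (Complex.I * ((∑ i, (k i : ℝ) * θ i : ℝ) : ℂ)))
    (Γ : ℝ) (hΓ : ∀ t, 0 ≤ t → Δ t * Real.exp (-(t * σ)) ≤ Γ) :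
    (∀ θ : Fin n → ℝ,
      (∑ b, (ω b : ℂ) * deriv (fun s : ℝ => Ffun (Function.update θ b s)) (θ b)) +
          Complex.I * (lam : ℂ) * Ffun θ = Rfun θ) ∧
    (∑' k : Fin n → ℤ,
        ‖R k‖ / |(∑ i, (k i : ℝ) * ω i) + lam| *
          Real.exp ((∑ i, |(k i : ℝ)|) * (r - σ))) ≤
      γ⁻¹ * Γ * ∑' k : Fin n → ℤ, ‖R k‖ * Real.exp ((∑ i, |(k i : ℝ)|) * r) := by
  classical
  set M : ℤ := ⌈K⌉ with hM
  set T : Finset (Fin n → ℤ) := Finset.Icc (fun _ => -M) (fun _ => M) with hT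
  have htnn : ∀ k : Fin n → ℤ, (0:ℝ) ≤ ∑ i, |(k i : ℝ)| :=
    fun k => Finset.sum_nonneg fun i _ => abs_nonneg _
  have hΔpos : ∀ t, 0 ≤ t → 0 < Δ t := fun t ht => lt_of_lt_of_le one_pos (hΔ1 t ht)
  have hnotT : ∀ k : Fin n → ℤ, k ∉ T → K < ∑ i, |(k i : ℝ)| := by
    intro k hk
    have : ∃ i, M < |k i| := by
      by_contra hcon
      push_neg at hcon
      exact hk (Finset.mem_Icc.mpr
        ⟨fun i => by have := abs_le.mp (hcon i); simpa using this.1,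
         fun i => by have := abs_le.mp (hcon i); simpa using this.2⟩)
    obtain ⟨i, hi⟩ := this
    have h1 : K ≤ (M:ℝ) := Int.le_ceil K
    have h2 : (M:ℝ) < |(k i : ℝ)| := by
      rw [← Int.cast_abs]; exact_mod_cast hi
    have h3 : |(k i : ℝ)| ≤ ∑ j, |(k j : ℝ)| :=
      Finset.single_le_sum (f := fun j => |(k j : ℝ)|)
        (fun j _ => abs_nonneg _) (Finset.mem_univ i)
    linarith
  have hdne : ∀ k : Fin n → ℤ, (∑ i, |(k i : ℝ)|) ≤ K →
      (∑ i, (k i : ℝ) * ω i) + lam ≠ 0 := by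
    intro k hk h0
    have h := hsd k hk
    rw [h0, abs_zero] at h
    exact absurd h (not_le.mpr (div_pos hγ (hΔpos _ (htnn k))))
  have hzero : ∀ k : Fin n → ℤ, k ∉ T → R k = 0 := fun k hk => hRsupp k (hnotT k hk)
  constructor
  · intro θ
    have hFsum : ∀ ϑ : Fin n → ℝ, Ffun ϑ =
        ∑ k ∈ T, R k / (Complex.I * (((∑ i, (k i : ℝ) * ω i) + lam : ℝ) : ℂ)) *
          Complex.exp (Complex.I * ((∑ i, (k i : ℝ) * ϑ i : ℝ) : ℂ)) := by
      intro ϑ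
      rw [hFfun ϑ]
      exact tsum_eq_sum (fun k hk => by rw [hzero k hk]; simp)
    have hRsum : Rfun θ =
        ∑ k ∈ T, R k * Complex.exp (Complex.I * ((∑ i, (k i : ℝ) * θ i : ℝ) : ℂ)) := by
      rw [hRfun θ]
      exact tsum_eq_sum (fun k hk => by rw [hzero k hk]; simp)
    set c : (Fin n → ℤ) → ℂ :=
      fun k => R k / (Complex.I * (((∑ i, (k i : ℝ) * ω i) + lam : ℝ) : ℂ)) with hc
    have hderiv : ∀ b : Fin n,
        deriv (fun s : ℝ => Ffun (Function.update θ b s)) (θ b) =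
        ∑ k ∈ T, c k * (Complex.I * ((k b : ℝ) : ℂ)) *
          Complex.exp (Complex.I * ((∑ i, (k i : ℝ) * θ i : ℝ) : ℂ)) := by
      intro b
      have hsplit : ∀ (k : Fin n → ℤ) (s : ℝ),
          (∑ i, (k i : ℝ) * Function.update θ b s i) =
            (k b : ℝ) * s + ∑ i ∈ Finset.univ.erase b, (k i : ℝ) * θ i := by
        intro k s
        rw [← Finset.add_sum_erase Finset.univ _ (Finset.mem_univ b)]
        congr 1
        · simp
        · exact Finset.sum_congr rfl fun i hi => by
            rw [Function.update_of_ne (Finset.mem_erase.mp hi).1]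
      have hfun : (fun s : ℝ => Ffun (Function.update θ b s)) =
          fun s : ℝ => ∑ k ∈ T, c k * Complex.exp (Complex.I *
            (((k b : ℝ) * s + ∑ i ∈ Finset.univ.erase b, (k i : ℝ) * θ i : ℝ) : ℂ)) := by
        funext s
        rw [hFsum (Function.update θ b s)]
        exact Finset.sum_congr rfl fun k _ => by rw [hsplit k s]
      have hda : HasDerivAt (fun s : ℝ => Ffun (Function.update θ b s))
          (∑ k ∈ T, c k * (Complex.I * ((k b : ℝ) : ℂ)) *
            Complex.exp (Complex.I * ((∑ i, (k i : ℝ) * θ i : ℝ) : ℂ))) (θ b) := by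
        rw [hfun]
        apply HasDerivAt.fun_sum
        intro k _
        have h1 : HasDerivAt (fun s : ℝ =>
            (k b : ℝ) * s + ∑ i ∈ Finset.univ.erase b, (k i : ℝ) * θ i)
            ((k b : ℝ)) (θ b) := by
          simpa using ((hasDerivAt_id (θ b)).const_mul ((k b : ℝ))).add_const
            (∑ i ∈ Finset.univ.erase b, (k i : ℝ) * θ i)
        have h2 := ((h1.ofReal_comp).const_mul Complex.I).cexp.const_mul (c k)
        have h3 : ((k b : ℝ) * θ b + ∑ i ∈ Finset.univ.erase b, (k i : ℝ) * θ i)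
            = ∑ i, (k i : ℝ) * θ i := by
          rw [← hsplit k (θ b)]
          exact Finset.sum_congr rfl fun i _ => by rw [Function.update_eq_self]
        refine h2.congr_deriv ?_
        rw [h3]
        ring
      exact hda.deriv
    rw [hRsum, hFsum θ]
    calc (∑ b, (ω b : ℂ) * deriv (fun s : ℝ => Ffun (Function.update θ b s)) (θ b)) +
          Complex.I * (lam : ℂ) *
            ∑ k ∈ T, c k * Complex.exp (Complex.I * ((∑ i, (k i : ℝ) * θ i : ℝ) : ℂ))
        = ∑ k ∈ T, (c k * (Complex.I * (((∑ i, (k i : ℝ) * ω i) + lam : ℝ) : ℂ))) *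
            Complex.exp (Complex.I * ((∑ i, (k i : ℝ) * θ i : ℝ) : ℂ)) := by
          simp only [hderiv, Finset.mul_sum]
          rw [Finset.sum_comm, ← Finset.sum_add_distrib]
          refine Finset.sum_congr rfl fun k _ => ?_
          have hsum : ∀ E : ℂ, ∑ b, ((ω b : ℝ) : ℂ) *
              (c k * (Complex.I * ((k b : ℝ) : ℂ)) * E) =
              (∑ b, ((k b : ℝ) : ℂ) * ((ω b : ℝ) : ℂ)) * (c k * Complex.I * E) := by
            intro E
            rw [Finset.sum_mul]
            exact Finset.sum_congr rfl fun b _ => by ring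
          rw [hsum]
          push_cast
          ring
      _ = ∑ k ∈ T, R k * Complex.exp (Complex.I * ((∑ i, (k i : ℝ) * θ i : ℝ) : ℂ)) := by
          refine Finset.sum_congr rfl fun k _ => ?_
          by_cases hk : (∑ i, |(k i : ℝ)|) ≤ K
          · have hd := hdne k hk
            have hne : Complex.I * (((∑ i, (k i : ℝ) * ω i) + lam : ℝ) : ℂ) ≠ 0 := by
              apply mul_ne_zero Complex.I_ne_zero
              exact_mod_cast hd
            simp only [hc]
            rw [div_mul_cancel₀ _ hne]
          · simp only [hc]
            rw [hRsupp k (not_le.mp hk)]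
            simp
  · have hL : (∑' k : Fin n → ℤ,
        ‖R k‖ / |(∑ i, (k i : ℝ) * ω i) + lam| *
          Real.exp ((∑ i, |(k i : ℝ)|) * (r - σ))) =
        ∑ k ∈ T, ‖R k‖ / |(∑ i, (k i : ℝ) * ω i) + lam| *
          Real.exp ((∑ i, |(k i : ℝ)|) * (r - σ)) :=
      tsum_eq_sum (fun k hk => by rw [hzero k hk]; simp)
    have hR' : (∑' k : Fin n → ℤ, ‖R k‖ * Real.exp ((∑ i, |(k i : ℝ)|) * r)) =
        ∑ k ∈ T, ‖R k‖ * Real.exp ((∑ i, |(k i : ℝ)|) * r) :=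
      tsum_eq_sum (fun k hk => by rw [hzero k hk]; simp)
    rw [hL, hR', Finset.mul_sum]
    refine Finset.sum_le_sum fun k _ => ?_
    by_cases hk : (∑ i, |(k i : ℝ)|) ≤ K
    · set t : ℝ := ∑ i, |(k i : ℝ)| with ht
      set d : ℝ := (∑ i, (k i : ℝ) * ω i) + lam with hd
      have ht0 : 0 ≤ t := htnn k
      have h1 : γ / Δ t ≤ |d| := hsd k hk
      have h2 : 0 < Δ t := hΔpos t ht0
      have hdpos : 0 < |d| := lt_of_lt_of_le (div_pos hγ h2) h1
      have key : |d|⁻¹ ≤ Δ t / γ := by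
        rw [le_div_iff₀ hγ]
        rw [div_le_iff₀ h2] at h1
        calc |d|⁻¹ * γ ≤ |d|⁻¹ * (|d| * Δ t) := by gcongr
          _ = Δ t := by field_simp
      calc ‖R k‖ / |d| * Real.exp (t * (r - σ))
          = ‖R k‖ * |d|⁻¹ * (Real.exp (t * r) * Real.exp (-(t * σ))) := by
            rw [div_eq_mul_inv, ← Real.exp_add,
              show t * r + -(t * σ) = t * (r - σ) by ring]
        _ ≤ ‖R k‖ * (Δ t / γ) * (Real.exp (t * r) * Real.exp (-(t * σ))) := by gcongr
        _ = γ⁻¹ * (Δ t * Real.exp (-(t * σ))) * (‖R k‖ * Real.exp (t * r)) := by ring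
        _ ≤ γ⁻¹ * Γ * (‖R k‖ * Real.exp (t * r)) := by
            gcongr
            exact hΓ t ht0
    · rw [hRsupp k (not_le.mp hk)]
      simp
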